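/- Suppose the BGK assumptions hold. Then there exists x ∈ [0, P] such that q(x) := ∫_ℝ μ'(½v² + φ(x)) dv > 0. In particular, there exists e ∈ [φ₋, ∞) with μ'(e) > 0, i.e. μ cannot satisfy μ'(e) ≤ 0 for all e ∈ [φ₋, ∞); the BGK wave cannot support a particle distribution function μ that is monotonically decreasing on [φ₋, ∞). -/

import Mathlib

open MeasureTheory

section BGKHelpers
open Set


/-- The dominating function is integrable. -/
lemma bgk_integrable_bound (C γ b : ℝ) (hC : 0 < C) (hγ : 1 < γ) :
    Integrable (fun v : ℝ => C / (1 + max (v ^ 2 / 2 + b) 0 ^ γ)) := by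
  have hγ0 : (0:ℝ) < γ := by linarith
  have hcont : Continuous fun v : ℝ => C / (1 + max (v ^ 2 / 2 + b) 0 ^ γ) := by
    have h1 : Continuous fun v : ℝ => max (v ^ 2 / 2 + b) 0 := by continuity
    have h2 : Continuous fun v : ℝ => max (v ^ 2 / 2 + b) 0 ^ γ := by
      refine continuous_iff_continuousAt.2 fun v => ?_
      exact (Real.continuousAt_rpow_const _ _ (Or.inr hγ0.le)).comp h1.continuousAt
    refine continuous_const.div (continuous_const.add h2) fun v => ?_
    positivity
  set R : ℝ := 1 + Real.sqrt (max (1 - 2 * b) 0) + 1 with hR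
  have hR1 : (1:ℝ) ≤ R := by
    have := Real.sqrt_nonneg (max (1 - 2 * b) 0)
    simp only [hR]; linarith
  have hR0 : (0:ℝ) < R := by linarith
  -- key : for |v| ≥ R, v^2/2 + b ≥ |v|
  have hkey : ∀ v : ℝ, R ≤ |v| → |v| ≤ v ^ 2 / 2 + b := by
    intro v hv
    have h1 : (|v| - 1) ^ 2 ≥ (R - 1) ^ 2 := by
      apply pow_le_pow_left₀ (by linarith) (by linarith)
    have h2 : (R - 1) ^ 2 ≥ 1 - 2 * b := by
      have : (R - 1) ^ 2 = Real.sqrt (max (1 - 2 * b) 0) ^ 2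
          + 2 * Real.sqrt (max (1 - 2 * b) 0) + 1 := by
        simp only [hR]; ring
      rw [this, Real.sq_sqrt (le_max_right _ _)]
      have := Real.sqrt_nonneg (max (1 - 2 * b) 0)
      have := le_max_left (1 - 2 * b) 0
      linarith
    have hv2 : v ^ 2 = |v| ^ 2 := (sq_abs v).symm
    nlinarith [abs_nonneg v]
  have hIoi : IntegrableOn (fun v : ℝ => C / (1 + max (v ^ 2 / 2 + b) 0 ^ γ)) (Ioi R) := by
    have hint : IntegrableOn (fun v : ℝ => C * v ^ (-γ)) (Ioi R) :=
      (integrableOn_Ioi_rpow_of_lt (by linarith) hR0).const_mul C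
    refine Integrable.mono' hint hcont.aestronglyMeasurable ?_
    refine (ae_restrict_iff' measurableSet_Ioi).2 (Filter.Eventually.of_forall fun v hv => ?_)
    have hv : R < v := hv
    have hv0 : (0:ℝ) < v := lt_of_lt_of_le hR0 hv.le
    have hvR : R ≤ |v| := by rw [abs_of_pos hv0]; exact hv.le
    have h1 : |v| ≤ v ^ 2 / 2 + b := hkey v hvR
    rw [abs_of_pos hv0] at h1
    have h2 : v ^ γ ≤ 1 + max (v ^ 2 / 2 + b) 0 ^ γ := by
      have : v ^ γ ≤ max (v ^ 2 / 2 + b) 0 ^ γ :=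
        Real.rpow_le_rpow hv0.le (le_max_of_le_left h1) hγ0.le
      have h0 : (0:ℝ) ≤ max (v ^ 2 / 2 + b) 0 ^ γ := by positivity
      linarith
    have hvγ : (0:ℝ) < v ^ γ := Real.rpow_pos_of_pos hv0 γ
    rw [Real.norm_eq_abs, abs_of_nonneg (by positivity)]
    calc C / (1 + max (v ^ 2 / 2 + b) 0 ^ γ) ≤ C / v ^ γ := by gcongr
      _ = C * v ^ (-γ) := by rw [Real.rpow_neg hv0.le, div_eq_mul_inv]
  have hIio : IntegrableOn (fun v : ℝ => C / (1 + max (v ^ 2 / 2 + b) 0 ^ γ)) (Iio (-R)) := by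
    rw [← (Measure.measurePreserving_neg (volume : Measure ℝ)).integrableOn_comp_preimage
        (Homeomorph.neg ℝ).measurableEmbedding]
    simp only [Function.comp_def, neg_preimage, neg_Iio, neg_neg, neg_sq]
    exact hIoi
  have hIcc : IntegrableOn (fun v : ℝ => C / (1 + max (v ^ 2 / 2 + b) 0 ^ γ)) (Icc (-R) R) :=
    hcont.integrableOn_Icc
  rw [← integrableOn_univ]
  refine ((hIio.union hIcc).union hIoi).mono_set fun v _ => ?_
  rcases lt_or_ge v (-R) with h | h
  · exact Or.inl (Or.inl h)
  · rcases le_or_gt v R with h' | h'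
    · exact Or.inl (Or.inr ⟨h, h'⟩)
    · exact Or.inr h'


lemma bgk_decay_bound (μ : ℝ → ℝ) {C γ : ℝ} (hC : 0 < C) (hγ : 1 < γ)
    (hdecay : ∀ y, |deriv μ y| ≤ C / (1 + |y| ^ γ)) {b s : ℝ} (hs : b ≤ s) (v : ℝ) :
    |deriv μ (v ^ 2 / 2 + s)| ≤ C / (1 + max (v ^ 2 / 2 + b) 0 ^ γ) := by
  refine (hdecay _).trans ?_
  have h1 : max (v ^ 2 / 2 + b) 0 ≤ |v ^ 2 / 2 + s| :=
    max_le ((by linarith : v ^ 2 / 2 + b ≤ v ^ 2 / 2 + s).trans (le_abs_self _)) (abs_nonneg _)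
  have h2 : max (v ^ 2 / 2 + b) 0 ^ γ ≤ |v ^ 2 / 2 + s| ^ γ :=
    Real.rpow_le_rpow (le_max_right _ _) h1 (by linarith)
  have h3 : (0:ℝ) < 1 + max (v ^ 2 / 2 + b) 0 ^ γ := by positivity
  gcongr

lemma bgk_hasDerivAt (μ φ : ℝ → ℝ) (hμC1 : ContDiff ℝ 1 μ)
    {C γ : ℝ} (hC : 0 < C) (hγ : 1 < γ)
    (hdecay : ∀ y, |deriv μ y| ≤ C / (1 + |y| ^ γ))
    (hφC2 : ContDiff ℝ 2 φ) {b : ℝ} (hb : ∀ x, b ≤ φ x)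
    (hμint : ∀ x, Integrable (fun v : ℝ => μ (v ^ 2 / 2 + φ x))) (x₀ : ℝ) :
    HasDerivAt (fun x => ∫ v : ℝ, μ (v ^ 2 / 2 + φ x))
      ((∫ v : ℝ, deriv μ (v ^ 2 / 2 + φ x₀)) * deriv φ x₀) x₀ := by
  have hμd : Differentiable ℝ μ := hμC1.differentiable one_ne_zero
  have hμ'c : Continuous (deriv μ) := hμC1.continuous_deriv le_rfl
  have hφd : Differentiable ℝ φ := hφC2.differentiable (by norm_num)
  have hφ'c : Continuous (deriv φ) := (hφC2.continuous_deriv (by norm_num))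
  -- bound on deriv φ near x₀
  obtain ⟨M, hM⟩ : ∃ M, ∀ x ∈ Icc (x₀ - 1) (x₀ + 1), ‖deriv φ x‖ ≤ M :=
    (isCompact_Icc).exists_bound_of_continuousOn hφ'c.continuousOn
  have hM0 : 0 ≤ M := le_trans (norm_nonneg _) (hM x₀ (by constructor <;> linarith))
  have key := hasDerivAt_integral_of_dominated_loc_of_deriv_le
    (F := fun x v => μ (v ^ 2 / 2 + φ x))
    (F' := fun x (v : ℝ) => deriv μ (v ^ 2 / 2 + φ x) * deriv φ x)
    (x₀ := x₀) (s := Metric.ball x₀ 1)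
    (bound := fun v : ℝ => C / (1 + max (v ^ 2 / 2 + b) 0 ^ γ) * M)
    (Metric.ball_mem_nhds x₀ one_pos)
    (Filter.Eventually.of_forall fun x =>
      (hμd.continuous.comp (by continuity)).aestronglyMeasurable)
    (hμint x₀)
    ((hμ'c.comp (by continuity : Continuous fun v : ℝ => v ^ 2 / 2 + φ x₀)).mul
      continuous_const).aestronglyMeasurable
    (Filter.Eventually.of_forall fun v x hx => ?_)
    ((bgk_integrable_bound C γ b hC hγ).mul_const M)
    (Filter.Eventually.of_forall fun v x hx => ?_)
  · simpa only [MeasureTheory.integral_mul_const] using key.2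
  · -- the bound
    rw [Real.norm_eq_abs, abs_mul]
    have h1 := bgk_decay_bound μ hC hγ hdecay (hb x) v
    have h2 : |deriv φ x| ≤ M := by
      have : x ∈ Icc (x₀ - 1) (x₀ + 1) := by
        have := Metric.mem_ball.1 hx
        rw [Real.dist_eq, abs_lt] at this
        constructor <;> linarith
      simpa using hM x this
    exact mul_le_mul h1 h2 (abs_nonneg _) (by positivity)
  · -- differentiability in x
    have h1 : HasDerivAt (fun x => v ^ 2 / 2 + φ x) (deriv φ x) x :=
      (hφd x).hasDerivAt.const_add _
    exact (hμd _).hasDerivAt.comp x h1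

variable (μ φ : ℝ → ℝ) (P : ℝ)

theorem bgk_main
    (hP : 0 < P)
    (hμC1 : ContDiff ℝ 1 μ) (hμnonneg : ∀ y, 0 ≤ μ y)
    (hdecay : ∃ C > (0:ℝ), ∃ γ > (1:ℝ), ∀ y, |deriv μ y| ≤ C / (1 + |y| ^ γ))
    (hφC2 : ContDiff ℝ 2 φ)
    (hφanti : StrictAntiOn φ (Set.Icc 0 (P / 2)))
    (hφmax : ∀ x, φ x ≤ φ 0)
    (hφmin : ∀ x, φ (P / 2) ≤ φ x)
    (hμint : ∀ x, Integrable (fun v : ℝ => μ (v ^ 2 / 2 + φ x)))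
    (hpoisson : ∀ x, deriv (deriv φ) x = 1 - ∫ v : ℝ, μ (v ^ 2 / 2 + φ x)) :
    ∃ x ∈ Set.Icc (0:ℝ) P, 0 < ∫ v : ℝ, deriv μ (v ^ 2 / 2 + φ x) := by
  by_contra hcon
  push_neg at hcon
  obtain ⟨C, hC, γ, hγ, hdec⟩ := hdecay
  have hφd : Differentiable ℝ φ := hφC2.differentiable (by norm_num)
  have hφ2 : ContDiff ℝ 1 (deriv φ) := by
    have := (contDiff_succ_iff_deriv (𝕜 := ℝ) (f := φ) (n := 1)).1 (by
      rw [one_add_one_eq_two]; exact hφC2)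
    exact this.2.2
  have hφ'd : Differentiable ℝ (deriv φ) := hφ2.differentiable one_ne_zero
  have hφ''c : Continuous (deriv (deriv φ)) := hφ2.continuous_deriv le_rfl
  have hP2 : 0 < P / 2 := by linarith
  have hP2P : P / 2 ≤ P := by linarith
  -- derivative of g
  set q : ℝ → ℝ := fun x => ∫ v : ℝ, deriv μ (v ^ 2 / 2 + φ x) with hq
  set g : ℝ → ℝ := fun x => ∫ v : ℝ, μ (v ^ 2 / 2 + φ x) with hg
  have hgderiv : ∀ x, HasDerivAt g (q x * deriv φ x) x := fun x =>
    bgk_hasDerivAt μ φ hμC1 hC hγ hdec hφC2 hφmin hμint x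
  -- g is continuous
  have hgcont : Continuous g := by
    have : g = fun x => 1 - deriv (deriv φ) x := by
      funext x
      have := hpoisson x
      simp only [hg]
      linarith
    rw [this]
    exact continuous_const.sub hφ''c
  -- deriv φ ≤ 0 on the interior
  have hφ'nonpos : ∀ c ∈ Ioo (0:ℝ) (P / 2), deriv φ c ≤ 0 := by
    intro c hc
    have hd := (hφd c).hasDerivAt
    rw [hasDerivAt_iff_tendsto_slope] at hd
    have h1 : Filter.Tendsto (slope φ c) (nhdsWithin c (Ioi c)) (nhds (deriv φ c)) :=
      hd.mono_left (nhdsWithin_mono _ fun y hy => ne_of_gt hy)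
    refine le_of_tendsto h1 ?_
    filter_upwards [Ioo_mem_nhdsGT_of_mem ⟨le_refl c, hc.2⟩] with y hy
    have hylt : φ y < φ c :=
      hφanti ⟨hc.1.le, hc.2.le⟩ ⟨(hc.1.trans hy.1).le, hy.2.le⟩ hy.1
    rw [slope_def_field]
    apply div_nonpos_of_nonpos_of_nonneg <;> [linarith [hylt]; linarith [hy.1]]
  -- g is monotone on [0, P/2]
  have hgmono : MonotoneOn g (Icc 0 (P / 2)) := by
    apply monotoneOn_of_deriv_nonneg (convex_Icc _ _) hgcont.continuousOn
    · exact fun x _ => ((hgderiv x).differentiableAt).differentiableWithinAt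
    · intro x hx
      rw [interior_Icc] at hx
      rw [(hgderiv x).deriv]
      have hq_nonpos : q x ≤ 0 := hcon x ⟨hx.1.le, hx.2.le.trans hP2P⟩
      nlinarith [mul_nonneg (neg_nonneg.2 hq_nonpos) (neg_nonneg.2 (hφ'nonpos x hx))]
  -- φ'' is antitone on [0, P/2]
  have hφ''anti : AntitoneOn (deriv (deriv φ)) (Icc 0 (P / 2)) := by
    intro a ha b hb hab
    rw [hpoisson a, hpoisson b]
    have := hgmono ha hb hab
    simp only [hg] at this
    linarith
  -- deriv φ 0 = 0 and deriv φ (P/2) = 0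
  have hφ'0 : deriv φ 0 = 0 :=
    IsLocalMax.deriv_eq_zero (Filter.Eventually.of_forall hφmax)
  have hφ'half : deriv φ (P / 2) = 0 :=
    IsLocalMin.deriv_eq_zero (Filter.Eventually.of_forall hφmin)
  -- MVT chain
  have hab : (P / 6 : ℝ) < P / 3 := by linarith
  obtain ⟨c, hc, hcslope⟩ :=
    exists_hasDerivAt_eq_slope φ (deriv φ) hab hφd.continuous.continuousOn
      (fun x _ => (hφd x).hasDerivAt)
  have hcIoo : c ∈ Ioo (0:ℝ) (P / 2) := ⟨by linarith [hc.1], by linarith [hc.2]⟩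
  have hφ'c : deriv φ c < 0 := by
    rw [hcslope]
    apply div_neg_of_neg_of_pos
    · have : φ (P / 3) < φ (P / 6) :=
        hφanti ⟨by linarith, by linarith⟩ ⟨by linarith, by linarith⟩ hab
      linarith
    · linarith
  obtain ⟨ξ₁, hξ₁, hξ₁eq⟩ :=
    exists_hasDerivAt_eq_slope (deriv φ) (deriv (deriv φ)) hcIoo.1
      hφ'd.continuous.continuousOn (fun x _ => (hφ'd x).hasDerivAt)
  obtain ⟨ξ₂, hξ₂, hξ₂eq⟩ :=
    exists_hasDerivAt_eq_slope (deriv φ) (deriv (deriv φ)) hcIoo.2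
      hφ'd.continuous.continuousOn (fun x _ => (hφ'd x).hasDerivAt)
  rw [hφ'0] at hξ₁eq
  rw [hφ'half] at hξ₂eq
  have h1 : deriv (deriv φ) ξ₁ < 0 := by
    rw [hξ₁eq]
    exact div_neg_of_neg_of_pos (by linarith) (by linarith [hcIoo.1])
  have h2 : 0 < deriv (deriv φ) ξ₂ := by
    rw [hξ₂eq]
    exact div_pos (by linarith) (by linarith [hcIoo.2])
  have h3 : deriv (deriv φ) ξ₂ ≤ deriv (deriv φ) ξ₁ :=
    hφ''anti ⟨hξ₁.1.le, by linarith [hξ₁.2, hcIoo.2]⟩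
      ⟨by linarith [hξ₂.1, hcIoo.1], hξ₂.2.le⟩ (by linarith [hξ₁.2, hξ₂.1])
  linarith

end BGKHelpers


/-- **BGK waves cannot support a monotonically decreasing distribution function.**
Under the BGK assumptions there exists `x ∈ [0,P]` with `q(x) = ∫ μ'(½v² + φ(x)) dv > 0`;
in particular there is an energy `e ≥ φ₋ = φ(P/2)` with `μ'(e) > 0`, i.e. `μ` cannot
satisfy `μ'(e) ≤ 0` for all `e ∈ [φ₋, ∞)`. -/
theorem bgk_q_positive_somewhere
    (μ φ : ℝ → ℝ) (P : ℝ) (hP : 0 < P)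
    (hμC1 : ContDiff ℝ 1 μ) (hμnonneg : ∀ y, 0 ≤ μ y)
    (hdecay : ∃ C > (0:ℝ), ∃ γ > (1:ℝ), ∀ y, |deriv μ y| ≤ C / (1 + |y| ^ γ))
    (hφC2 : ContDiff ℝ 2 φ)
    (hφper : ∀ x, φ (x + P) = φ x)
    (hφsym : ∀ x ∈ Set.Icc 0 P, φ (P - x) = φ x)
    (hφanti : StrictAntiOn φ (Set.Icc 0 (P / 2)))
    (hφmax : ∀ x, φ x ≤ φ 0)
    (hφmin : ∀ x, φ (P / 2) ≤ φ x)
    (hμint : ∀ x, Integrable (fun v : ℝ => μ (v ^ 2 / 2 + φ x)))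
    (hpoisson : ∀ x, deriv (deriv φ) x = 1 - ∫ v : ℝ, μ (v ^ 2 / 2 + φ x)) :
    (∃ x ∈ Set.Icc (0:ℝ) P, 0 < ∫ v : ℝ, deriv μ (v ^ 2 / 2 + φ x)) ∧
    (∃ e, φ (P / 2) ≤ e ∧ 0 < deriv μ e) ∧
    ¬ (∀ e, φ (P / 2) ≤ e → deriv μ e ≤ 0) := by
  have hmain : ∃ x ∈ Set.Icc (0:ℝ) P, 0 < ∫ v : ℝ, deriv μ (v ^ 2 / 2 + φ x) :=
    bgk_main μ φ P hP hμC1 hμnonneg hdecay hφC2 hφanti hφmax hφmin hμint hpoisson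
  obtain ⟨x, hx, hxpos⟩ := hmain
  have hkey : ¬ (∀ e, φ (P / 2) ≤ e → deriv μ e ≤ 0) := by
    intro hall
    have : (∫ v : ℝ, deriv μ (v ^ 2 / 2 + φ x)) ≤ 0 := by
      apply integral_nonpos
      intro v
      apply hall
      have h1 : (0:ℝ) ≤ v ^ 2 / 2 := by positivity
      have h2 := hφmin x
      linarith
    linarith
  have hex : ∃ e, φ (P / 2) ≤ e ∧ 0 < deriv μ e := by
    by_contra hcon
    push_neg at hcon
    exact hkey hcon
  exact ⟨⟨x, hx, hxpos⟩, hex, hkey⟩
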